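/- arXiv:0802.0339 — 2 statements merged into one kernel-verified Lean document; each statement's English description precedes it below -/
import Mathlib

section
/- There is a universal constant c > 0 such that for every finite set V with |V| ≥ 2 and every probability distribution μ on V, d(μ, U) ≥ (c / log|V|) · ENT(μ), where U is the uniform distribution on V. -/
open Finset

/-- Relative entropy `ENT(p) = Σ_i p_i log(|V| p_i)` of a distribution on a finite set,
with the convention `0 log 0 = 0` (automatic since `Real.log 0 = 0`). -/
noncomputable def relEnt {V : Type*} [Fintype V] (p : V → ℝ) : ℝ :=
  ∑ x, p x * Real.log ((Fintype.card V : ℝ) * p x)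

/-- `d(p,q) = (1/2) p log p + (1/2) q log q − ((p+q)/2) log((p+q)/2)`, with `0 log 0 = 0`. -/
noncomputable def dEnt (p q : ℝ) : ℝ :=
  p / 2 * Real.log p + q / 2 * Real.log q - (p + q) / 2 * Real.log ((p + q) / 2)

/-- The "distance" `d(p,q) = Σ_i d(p_i, q_i)` between two distributions on a finite set. -/
noncomputable def vecD {V : Type*} [Fintype V] (p q : V → ℝ) : ℝ :=
  ∑ i, dEnt (p i) (q i)

/-- `p` is a probability distribution on the finite set `V`. -/
def IsDist {V : Type*} [Fintype V] (p : V → ℝ) : Prop :=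
  (∀ x, 0 ≤ p x) ∧ (∑ x, p x) = 1

/- ### Auxiliary functions -/

noncomputable def Hf (t : ℝ) : ℝ := t/2 * Real.log t - (t+1)/2 * Real.log ((t+1)/2)
noncomputable def Pf (t : ℝ) : ℝ := t * Real.log t - t + 1

lemma continuous_Hf : Continuous Hf := by
  have h1 : Continuous fun t : ℝ => t * Real.log t := Real.continuous_mul_log
  have h2 : Continuous fun t : ℝ => ((t+1)/2) * Real.log ((t+1)/2) :=
    h1.comp (by continuity)
  have he : Hf = fun t => (1/2) * (t * Real.log t) - ((t+1)/2) * Real.log ((t+1)/2) := by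
    funext t; unfold Hf; ring
  rw [he]; exact (continuous_const.mul h1).sub h2

lemma continuous_Pf : Continuous Pf := by
  have h1 : Continuous fun t : ℝ => t * Real.log t := Real.continuous_mul_log
  have he : Pf = fun t => (t * Real.log t) - t + 1 := rfl
  rw [he]; continuity

lemma hasDerivAt_Hf {t : ℝ} (ht : 0 < t) :
    HasDerivAt Hf ((Real.log t - Real.log ((t+1)/2))/2) t := by
  have h1 : HasDerivAt (fun x : ℝ => x * Real.log x) (Real.log t + 1) t :=
    Real.hasDerivAt_mul_log ht.ne'
  have h2 : HasDerivAt (fun x : ℝ => (x+1)/2) (1/2) t := by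
    simpa using ((hasDerivAt_id t).add_const 1).div_const 2
  have h3 : HasDerivAt (fun x : ℝ => x * Real.log x) (Real.log ((t+1)/2) + 1) ((t+1)/2) :=
    Real.hasDerivAt_mul_log (by positivity)
  have h4 : HasDerivAt (fun x : ℝ => ((x+1)/2) * Real.log ((x+1)/2))
      ((Real.log ((t+1)/2) + 1) * (1/2)) t := by have := h3.comp t h2; exact this
  have h5 := (h1.const_mul (1/2 : ℝ)).sub h4
  have he : Hf = fun x => (1/2) * (x * Real.log x) - ((x+1)/2) * Real.log ((x+1)/2) := by
    funext x; unfold Hf; ring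
  rw [he]
  exact h5.congr_deriv (by ring)

lemma hasDerivAt_Pf {t : ℝ} (ht : 0 < t) : HasDerivAt Pf (Real.log t) t := by
  have h1 : HasDerivAt (fun x : ℝ => x * Real.log x) (Real.log t + 1) t :=
    Real.hasDerivAt_mul_log ht.ne'
  have h5 := (h1.sub (hasDerivAt_id t)).add_const 1
  have he : Pf = fun x => (x * Real.log x - x) + 1 := by
    funext x; unfold Pf; ring
  rw [he]
  exact h5.congr_deriv (by ring)

lemma Pf_nonneg {t : ℝ} (ht : 0 ≤ t) : 0 ≤ Pf t := by
  rcases eq_or_lt_of_le ht with h | h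
  · simp [Pf, ← h]
  · have h1 : Real.log t⁻¹ ≤ t⁻¹ - 1 := Real.log_le_sub_one_of_pos (by positivity)
    rw [Real.log_inv] at h1
    have h2 : t * t⁻¹ = 1 := mul_inv_cancel₀ h.ne'
    have h3 := mul_le_mul_of_nonneg_left h1 ht
    unfold Pf
    nlinarith

lemma poly1 {t : ℝ} (h0 : 0 < t) (h1 : t ≤ 1) : 32 * t^4 ≤ (t+1)^5 := by
  have a : 4*t ≤ (t+1)^2 := by nlinarith [sq_nonneg (t-1)]
  have b : 16*t^2 ≤ (t+1)^4 := by nlinarith [sq_nonneg t, mul_self_nonneg ((t+1)^2 - 4*t)]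
  have c : 2*t^2 ≤ t+1 := by nlinarith
  calc 32 * t^4 = (16*t^2) * (2*t^2) := by ring
    _ ≤ (t+1)^4 * (t+1) := mul_le_mul b c (by positivity) (by positivity)
    _ = (t+1)^5 := by ring

lemma poly2 {t : ℝ} (h1 : 1 ≤ t) (h4 : t ≤ 4) : (t+1)^5 ≤ 32 * t^4 := by
  nlinarith [sq_nonneg (t-1), sq_nonneg (t-4), mul_nonneg (sub_nonneg.2 h1) (sub_nonneg.2 h4),
    sq_nonneg (t*t-1), sq_nonneg (t*t-4*t), sq_nonneg (t*t - 2*t)]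

/-- The derivative of `G = 10 Hf - Pf`. -/
lemma hasDerivAt_G {t : ℝ} (ht : 0 < t) :
    HasDerivAt (fun t => 10 * Hf t - Pf t)
      (4 * Real.log t - 5 * Real.log ((t+1)/2)) t := by
  have h := ((hasDerivAt_Hf ht).const_mul (10:ℝ)).sub (hasDerivAt_Pf ht)
  exact h.congr_deriv (by ring)

lemma lemA {t : ℝ} (h0 : 0 ≤ t) (h4 : t ≤ 4) : Pf t ≤ 10 * Hf t := by
  set G : ℝ → ℝ := fun t => 10 * Hf t - Pf t with hG
  have hGc : Continuous G := (continuous_const.mul continuous_Hf).sub continuous_Pf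
  have hG1 : G 1 = 0 := by
    simp [hG, Hf, Pf]
  have key : 0 ≤ G t := by
    rcases le_total t 1 with h | h
    · have mono : AntitoneOn G (Set.Icc 0 1) := by
        apply antitoneOn_of_deriv_nonpos (convex_Icc 0 1) hGc.continuousOn
        · intro x hx
          rw [interior_Icc] at hx
          exact (hasDerivAt_G hx.1).differentiableAt.differentiableWithinAt
        · intro x hx
          rw [interior_Icc] at hx
          rw [(hasDerivAt_G hx.1).deriv]
          have hlog : Real.log (x^4) ≤ Real.log (((x+1)/2)^5) := by
            apply Real.log_le_log (pow_pos hx.1 4)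
            have := poly1 hx.1 hx.2.le
            nlinarith
          rw [Real.log_pow, Real.log_pow] at hlog
          push_cast at hlog
          linarith
      have h01 : t ∈ Set.Icc (0:ℝ) 1 := ⟨h0, h⟩
      have hmt := mono h01 (Set.right_mem_Icc.2 zero_le_one) h
      rw [hG1] at hmt
      linarith
    · have mono : MonotoneOn G (Set.Icc 1 4) := by
        apply monotoneOn_of_deriv_nonneg (convex_Icc 1 4) hGc.continuousOn
        · intro x hx
          rw [interior_Icc] at hx
          exact (hasDerivAt_G (by linarith [hx.1])).differentiableAt.differentiableWithinAt
        · intro x hx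
          rw [interior_Icc] at hx
          rw [(hasDerivAt_G (by linarith [hx.1])).deriv]
          have hlog : Real.log (((x+1)/2)^5) ≤ Real.log (x^4) := by
            apply Real.log_le_log (pow_pos (by linarith [hx.1]) 5)
            have := poly2 hx.1.le hx.2.le
            nlinarith
          rw [Real.log_pow, Real.log_pow] at hlog
          push_cast at hlog
          linarith
      have h14 : t ∈ Set.Icc (1:ℝ) 4 := ⟨h, h4⟩
      have hmt := mono (Set.left_mem_Icc.2 (by norm_num)) h14 h
      rw [hG1] at hmt
      linarith
  simp only [hG] at key
  linarith

lemma log85 : (1/10 : ℝ) ≤ Real.log (8/5) := by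
  have h1 : Real.log 2 ≤ Real.log ((8/5:ℝ)^2) := Real.log_le_log two_pos (by norm_num)
  rw [Real.log_pow] at h1
  push_cast at h1
  have h2 := Real.log_two_gt_d9
  linarith

lemma hasDerivAt_K {t : ℝ} (ht : 0 < t) :
    HasDerivAt (fun t => Hf t - t/20)
      ((Real.log t - Real.log ((t+1)/2))/2 - 1/20) t := by
  have h := (hasDerivAt_Hf ht).sub ((hasDerivAt_id t).div_const 20)
  exact h

lemma lemB {t : ℝ} (h4 : 4 ≤ t) : t/20 ≤ Hf t := by
  set K : ℝ → ℝ := fun t => Hf t - t/20 with hK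
  have hKc : Continuous K := continuous_Hf.sub (by continuity)
  have mono : MonotoneOn K (Set.Ici 4) := by
    apply monotoneOn_of_deriv_nonneg (convex_Ici 4) hKc.continuousOn
    · intro x hx
      rw [interior_Ici] at hx
      exact (hasDerivAt_K (by linarith [Set.mem_Ioi.1 hx])).differentiableAt.differentiableWithinAt
    · intro x hx
      rw [interior_Ici] at hx
      have hx4 : (4:ℝ) < x := hx
      rw [(hasDerivAt_K (by linarith)).deriv]
      have hd : Real.log (x / ((x+1)/2)) = Real.log x - Real.log ((x+1)/2) :=
        Real.log_div (by linarith) (by positivity)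
      have hr : (8/5 : ℝ) ≤ x / ((x+1)/2) := by
        rw [le_div_iff₀ (by positivity)]
        nlinarith
      have hl : Real.log (8/5 : ℝ) ≤ Real.log (x / ((x+1)/2)) :=
        Real.log_le_log (by norm_num) hr
      have := log85
      rw [← hd] at *
      linarith
  have hK4 : 0 ≤ K 4 := by
    have hlog4 : Real.log (4:ℝ) = 2 * Real.log 2 := by
      rw [show (4:ℝ) = 2^2 by norm_num, Real.log_pow]; push_cast; ring
    have hlog52 : Real.log ((5:ℝ)/2) = Real.log 5 - Real.log 2 :=
      Real.log_div (by norm_num) (by norm_num)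
    have h57 : 3 * Real.log 5 ≤ 7 * Real.log 2 := by
      have h1 : Real.log ((5:ℝ)^3) ≤ Real.log ((2:ℝ)^7) :=
        Real.log_le_log (by norm_num) (by norm_num)
      rw [Real.log_pow, Real.log_pow] at h1
      push_cast at h1
      linarith
    have h2 := Real.log_two_gt_d9
    simp only [hK, Hf]
    rw [show (4:ℝ)+1 = 5 by norm_num, show (5:ℝ)/2 = 5/2 by norm_num]
    rw [hlog4, hlog52]
    nlinarith
  have := mono (Set.self_mem_Ici) (Set.mem_Ici.2 h4) h4
  simp only [hK] at this hK4
  linarith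

lemma lemC {N t : ℝ} (hN : 2 ≤ N) (h0 : 0 ≤ t) (htN : t ≤ N) :
    (1/20) / Real.log N * Pf t ≤ Hf t := by
  have hl2 := Real.log_two_gt_d9
  have hLN : Real.log 2 ≤ Real.log N := Real.log_le_log two_pos hN
  have hLpos : (0:ℝ) < Real.log N := by linarith
  rcases le_total t 4 with h | h
  · have hP := Pf_nonneg h0
    have hA := lemA h0 h
    have h1 : (1/20) / Real.log N * Pf t ≤ (1/20) / Real.log 2 * Pf t := by
      apply mul_le_mul_of_nonneg_right _ hP
      apply div_le_div_of_nonneg_left (by norm_num) (by linarith) hLN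
    have h2 : (1/20) / Real.log 2 * Pf t ≤ (1/10) * Pf t := by
      apply mul_le_mul_of_nonneg_right _ hP
      rw [div_le_iff₀ (by linarith)]
      nlinarith
    linarith
  · have hHf := lemB h
    have hPle : Pf t ≤ t * Real.log N := by
      have hlt : Real.log t ≤ Real.log N := Real.log_le_log (by linarith) htN
      have hp2 : Pf t ≤ t * Real.log t := by unfold Pf; linarith
      calc Pf t ≤ t * Real.log t := hp2
        _ ≤ t * Real.log N := mul_le_mul_of_nonneg_left hlt (by linarith)
    calc (1/20)/Real.log N * Pf t ≤ (1/20)/Real.log N * (t * Real.log N) := by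
          apply mul_le_mul_of_nonneg_left hPle (by positivity)
      _ = t/20 := by field_simp
      _ ≤ Hf t := hHf

lemma dEnt_scale {u t : ℝ} (hu : 0 < u) (ht : 0 ≤ t) : dEnt (u*t) u = u * Hf t := by
  have h2 : Real.log ((u*t+u)/2) = Real.log u + Real.log ((t+1)/2) := by
    rw [show (u*t+u)/2 = u * ((t+1)/2) by ring, Real.log_mul hu.ne' (by positivity)]
  rcases eq_or_lt_of_le ht with h | h
  · unfold dEnt Hf
    rw [h2, ← h]
    simp
    ring
  · have h1 : Real.log (u*t) = Real.log u + Real.log t := Real.log_mul hu.ne' h.ne'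
    unfold dEnt Hf
    rw [h1, h2]
    ring

/-- There is a universal constant `c > 0` such that for every finite set `V` with `|V| ≥ 2`
and every distribution `μ` on `V`, `d(μ, U) ≥ (c / log |V|) · ENT(μ)`,
`U` being the uniform distribution on `V`. -/
theorem dEnt_uniform_ge_entropy :
    ∃ c : ℝ, 0 < c ∧
      ∀ (V : Type) [Fintype V], 2 ≤ Fintype.card V →
        ∀ μ : V → ℝ, IsDist μ →
          c / Real.log (Fintype.card V) * relEnt μ
            ≤ vecD μ (fun _ => (Fintype.card V : ℝ)⁻¹) := by
  refine ⟨1/20, by norm_num, ?_⟩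
  intro V _ hcard μ hμ
  obtain ⟨hpos, hsum⟩ := hμ
  set n := Fintype.card V with hn
  have hN : (2:ℝ) ≤ (n:ℝ) := by exact_mod_cast hcard
  have hNpos : (0:ℝ) < (n:ℝ) := by linarith
  have hμle : ∀ x, μ x ≤ 1 := by
    intro x
    have h := Finset.single_le_sum (f := μ) (fun i _ => hpos i) (Finset.mem_univ x)
    rw [hsum] at h
    exact h
  have point : ∀ x, (n:ℝ)⁻¹ * Pf ((n:ℝ) * μ x)
      = μ x * Real.log ((n:ℝ) * μ x) - μ x + (n:ℝ)⁻¹ := by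
    intro x
    unfold Pf
    field_simp
  have key1 : relEnt μ = ∑ x, (n:ℝ)⁻¹ * Pf ((n:ℝ) * μ x) := by
    simp_rw [point]
    rw [Finset.sum_add_distrib, Finset.sum_sub_distrib, hsum, Finset.sum_const,
      Finset.card_univ, ← hn]
    have hinv : (n:ℝ) * (n:ℝ)⁻¹ = 1 := mul_inv_cancel₀ hNpos.ne'
    unfold relEnt
    rw [← hn]
    simp only [nsmul_eq_mul]
    linarith
  have key2 : vecD μ (fun _ => (n:ℝ)⁻¹) = ∑ x, (n:ℝ)⁻¹ * Hf ((n:ℝ) * μ x) := by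
    unfold vecD
    apply Finset.sum_congr rfl
    intro x _
    have hx : μ x = (n:ℝ)⁻¹ * ((n:ℝ) * μ x) := by field_simp
    conv_lhs => rw [hx]
    exact dEnt_scale (inv_pos.2 hNpos) (mul_nonneg hNpos.le (hpos x))
  rw [key1, key2, Finset.mul_sum]
  apply Finset.sum_le_sum
  intro x _
  have hC := lemC (t := (n:ℝ) * μ x) hN (mul_nonneg hNpos.le (hpos x)) (by nlinarith [hμle x, hpos x])
  have hinv : (0:ℝ) ≤ (n:ℝ)⁻¹ := by positivity
  calc 1/20 / Real.log (n:ℝ) * ((n:ℝ)⁻¹ * Pf ((n:ℝ) * μ x))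
      = (n:ℝ)⁻¹ * ((1/20) / Real.log (n:ℝ) * Pf ((n:ℝ) * μ x)) := by ring
    _ ≤ (n:ℝ)⁻¹ * Hf ((n:ℝ) * μ x) := mul_le_mul_of_nonneg_left hC hinv
end

section
/- Consider the L-reversal chain on n cards (n even, 2 ≤ L ≤ n/4) with positions and cards both labeled 1,...,n around the n-cycle, started from the identity arrangement. Let A be the event that after t steps, the cards 1,...,n/2 occupy the positions 1,...,n/2 in some order. Then P(A) ≥ (1 − 2L/n)^t. -/
open Finset

/-- Reversal of the interval of positions `v, v+1, …, v+l` of the `n`-cycle `ZMod n`,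
as a function on positions: `p = v + i` with `0 ≤ i ≤ l` is sent to `v + l - i`. -/
def revFun (n : ℕ) (v : ZMod n) (l : ℕ) (p : ZMod n) : ZMod n :=
  if (p - v).val ≤ l then v + (l : ZMod n) - (p - v) else p

/-- The cycle (graph) distance between two positions of the `n`-cycle `ZMod n`. -/
def cdist {n : ℕ} (a b : ZMod n) : ℕ := min (a - b).val (b - a).val

/-- The position `p` is cut by the move reversing the interval `v, …, v+l`: exactly the
four positions `v-1, v, v+l, v+l+1` (whose cards become adjacent to a different pair of
cards) are cut, and the trivial moves `l = 0` cut nobody. -/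
def isCut {n : ℕ} (v : ZMod n) (l : ℕ) (p : ZMod n) : Prop :=
  l ≠ 0 ∧ (p = v - 1 ∨ p = v ∨ p = v + (l : ZMod n) ∨ p = v + (l : ZMod n) + 1)

/-- The position, after `m` steps, of the card initially in position `x`, when the moves
of the `L`-reversal chain are given by `ω` (`(ω s).1` = starting position of the interval
reversed at step `s`, `(ω s).2` = its length). -/
def posAt {n L t : ℕ} (ω : Fin t → ZMod n × Fin (L + 1)) (x : ZMod n) : ℕ → ZMod n
  | 0 => x
  | m + 1 => if h : m < t then revFun n (ω ⟨m, h⟩).1 ((ω ⟨m, h⟩).2 : ℕ) (posAt ω x m)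
             else posAt ω x m

/-- The card initially in position `x` is cut by the move performed at step `s`
(i.e. at time `s + 1`). -/
def cutAt {n L t : ℕ} (ω : Fin t → ZMod n × Fin (L + 1)) (x : ZMod n) (s : Fin t) : Prop :=
  isCut (ω s).1 ((ω s).2 : ℕ) (posAt ω x s)

/-- The probability of the event `E` under the uniform distribution on the finite
sample space `Ω`; for the `L`-reversal chain, an i.i.d. uniform move sequence is a
uniform point of `Ω = Fin t → ZMod n × Fin (L+1)`. -/
noncomputable def probOf {Ω : Type*} [Fintype Ω] (E : Ω → Prop) : ℝ :=
  (Nat.card {ω : Ω // E ω} : ℝ) / (Fintype.card Ω : ℝ)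

/-- A move preserves the half `{p : p.val < n/2}` (as a set of positions). -/
def GoodMove (n L : ℕ) (m : ZMod n × Fin (L + 1)) : Prop :=
  ∀ p : ZMod n, p.val < n / 2 → (revFun n m.1 (m.2 : ℕ) p).val < n / 2

lemma revFun_half {n : ℕ} [NeZero n] {v : ZMod n} {l : ℕ}
    (h1 : v.val + l < n / 2 ∨ (n / 2 ≤ v.val ∧ v.val + l < n))
    {p : ZMod n} (hp : p.val < n / 2) : (revFun n v l p).val < n / 2 := by
  have hn2 : n / 2 ≤ n := Nat.div_le_self _ _
  unfold revFun
  split_ifs with hd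
  · rcases h1 with h | ⟨h2, h3⟩
    · -- interval fully in the first half
      set d := (p - v).val with hdd
      have hsub : (l : ZMod n) - (p - v) = ((l - d : ℕ) : ZMod n) := by
        rw [Nat.cast_sub hd, hdd, ZMod.natCast_val, ZMod.cast_id]
      have heq : v + (l : ZMod n) - (p - v) = v + ((l - d : ℕ) : ZMod n) := by
        rw [add_sub_assoc, hsub]
      have h4 : ((l - d : ℕ) : ZMod n).val = l - d :=
        ZMod.val_natCast_of_lt (by omega)
      rw [heq, ZMod.val_add_of_lt (by omega), h4]
      omega
    · -- interval fully in the second half: impossible that p is in the interval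
      exfalso
      have hpe : p = v + (p - v) := by ring
      have hplt : v.val + (p - v).val < n := by omega
      have : p.val = v.val + (p - v).val := by
        conv_lhs => rw [hpe]
        exact ZMod.val_add_of_lt hplt
      omega
  · exact hp

lemma posAt_half {n L t : ℕ} [NeZero n] {ω : Fin t → ZMod n × Fin (L + 1)}
    (hω : ∀ s, GoodMove n L (ω s)) {x : ZMod n} (hx : x.val < n / 2) :
    ∀ m, (posAt ω x m).val < n / 2
  | 0 => hx
  | m + 1 => by
      rw [posAt]
      split_ifs with h
      · exact hω ⟨m, h⟩ _ (posAt_half hω hx m)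
      · exact posAt_half hω hx m

lemma goodMove_card {n L : ℕ} [NeZero n] (hL2 : 2 ≤ L) (hLn : 4 * L ≤ n) :
    (n - 2 * L) * (L + 1) ≤ Nat.card {m : ZMod n × Fin (L + 1) // GoodMove n L m} := by
  have hn2 : 2 * L ≤ n / 2 := by omega
  have hnn : 0 < n := Nat.pos_of_ne_zero (NeZero.ne n)
  have key : ∀ il : Fin (n - 2 * L) × Fin (L + 1), GoodMove n L
      ((if (il.1 : ℕ) < n / 2 - L then (((il.1 : ℕ)) : ZMod n)
        else (((il.1 : ℕ) + L : ℕ) : ZMod n)), il.2) := by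
    intro il p hp
    dsimp only [GoodMove]
    split_ifs with hi
    · apply revFun_half (Or.inl ?_) hp
      rw [ZMod.val_natCast_of_lt (by omega)]
      have := il.2.isLt
      omega
    · apply revFun_half (Or.inr ⟨?_, ?_⟩) hp
      · rw [ZMod.val_natCast_of_lt (by omega : (il.1 : ℕ) + L < n)]
        omega
      · rw [ZMod.val_natCast_of_lt (by omega : (il.1 : ℕ) + L < n)]
        have := il.2.isLt
        have := il.1.isLt
        omega
  have hinj : Function.Injective
      (fun il : Fin (n - 2 * L) × Fin (L + 1) =>
        (⟨_, key il⟩ : {m : ZMod n × Fin (L + 1) // GoodMove n L m})) := by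
    rintro ⟨i, l⟩ ⟨i', l'⟩ h
    simp only [Subtype.mk.injEq, Prod.mk.injEq] at h
    obtain ⟨h1, h2⟩ := h
    have hiv : (i : ℕ) < n - 2 * L := i.isLt
    have hiv' : (i' : ℕ) < n - 2 * L := i'.isLt
    have hval := congrArg ZMod.val h1
    rw [Prod.mk.injEq]
    refine ⟨Fin.ext ?_, h2⟩
    split_ifs at hval with ha hb hb <;>
      rw [ZMod.val_natCast_of_lt (by omega), ZMod.val_natCast_of_lt (by omega)] at hval <;>
      omega
  calc (n - 2 * L) * (L + 1)
      = Nat.card (Fin (n - 2 * L) × Fin (L + 1)) := by simp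
    _ ≤ _ := Nat.card_le_card_of_injective _ hinj

/-- For the `L`-reversal chain on `n` cards (`n` even, `2 ≤ L ≤ n/4`) started from the
identity arrangement, the probability that after `t` steps the `n/2` cards of one half
of the cycle again occupy (in some order) the `n/2` positions of that half is at least
`(1 − 2L/n)^t`.  (Cards are labeled by their initial positions, so the half is the arc
of positions `p` with `p.val < n/2`.) -/
theorem half_stays_probability (n L t : ℕ) [NeZero n] (heven : n % 2 = 0)
    (hL2 : 2 ≤ L) (hLn : 4 * L ≤ n) :
    (1 - 2 * (L : ℝ) / n) ^ t ≤
      probOf (fun ω : Fin t → ZMod n × Fin (L + 1) =>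
        ∀ x : ZMod n, x.val < n / 2 → (posAt ω x t).val < n / 2) := by
  classical
  have hnn : 0 < n := Nat.pos_of_ne_zero (NeZero.ne n)
  have h2L : 2 * L ≤ n := by omega
  -- card of the all-good event is g ^ t
  have hcardGood : Nat.card {ω : Fin t → ZMod n × Fin (L + 1) // ∀ s, GoodMove n L (ω s)}
      = (Nat.card {m : ZMod n × Fin (L + 1) // GoodMove n L m}) ^ t := by
    rw [Nat.card_congr (Equiv.subtypePiEquivPi), Nat.card_pi]
    simp
  -- the all-good event is included in the target event
  have hsub : (Nat.card {m : ZMod n × Fin (L + 1) // GoodMove n L m}) ^ t ≤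
      Nat.card {ω : Fin t → ZMod n × Fin (L + 1) //
        ∀ x : ZMod n, x.val < n / 2 → (posAt ω x t).val < n / 2} := by
    rw [← hcardGood]
    refine Nat.card_le_card_of_injective
      (fun w => ⟨w.1, fun x hx => posAt_half w.2 hx t⟩) ?_
    intro a b h
    apply Subtype.ext
    simpa [Subtype.ext_iff] using h
  have hglb : (n - 2 * L) * (L + 1) ≤ Nat.card {m : ZMod n × Fin (L + 1) // GoodMove n L m} :=
    goodMove_card hL2 hLn
  -- total size
  have hcardΩ : (Fintype.card (Fin t → ZMod n × Fin (L + 1)) : ℝ)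
      = ((n * (L + 1) : ℕ) : ℝ) ^ t := by
    rw [Fintype.card_fun, Fintype.card_prod, ZMod.card, Fintype.card_fin, Fintype.card_fin]
    push_cast
    ring
  unfold probOf
  rw [hcardΩ]
  have hN : (0 : ℝ) < ((n * (L + 1) : ℕ) : ℝ) := by positivity
  have hne : (n : ℝ) ≠ 0 := Nat.cast_ne_zero.mpr hnn.ne'
  have hstep : (1 - 2 * (L : ℝ) / n) ≤
      (Nat.card {m : ZMod n × Fin (L + 1) // GoodMove n L m} : ℝ) / ((n * (L + 1) : ℕ) : ℝ) := by
    rw [le_div_iff₀ hN]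
    calc (1 - 2 * (L : ℝ) / n) * ((n * (L + 1) : ℕ) : ℝ)
        = ((n : ℝ) - 2 * L) * (L + 1) := by
          push_cast
          field_simp
      _ = (((n - 2 * L) * (L + 1) : ℕ) : ℝ) := by
          rw [Nat.cast_mul, Nat.cast_sub h2L]
          push_cast
          ring
      _ ≤ _ := by exact_mod_cast hglb
  have hnonneg : (0 : ℝ) ≤ 1 - 2 * (L : ℝ) / n := by
    rw [sub_nonneg, div_le_one (by positivity)]
    exact_mod_cast h2L
  calc (1 - 2 * (L : ℝ) / n) ^ t
      ≤ ((Nat.card {m : ZMod n × Fin (L + 1) // GoodMove n L m} : ℝ)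
          / ((n * (L + 1) : ℕ) : ℝ)) ^ t := pow_le_pow_left₀ hnonneg hstep t
    _ = ((Nat.card {m : ZMod n × Fin (L + 1) // GoodMove n L m} : ℝ) ^ t)
          / (((n * (L + 1) : ℕ) : ℝ) ^ t) := div_pow _ _ _
    _ ≤ _ := by
        apply div_le_div_of_nonneg_right ?_ (by positivity)
        exact_mod_cast hsub
end
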